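/- Let S be a Dirac bundle over a compact riemannian n-manifold with Dirac operator D and Weitzenböck operator R. A smooth section σ satisfies the twistor equation ∇_X σ + (1/n) X·Dσ = 0 for all tangent vectors X if and only if D²σ = (n/(n−1)) Rσ. -/

import Mathlib

open scoped InnerProductSpace

/-- (Theorem B, first part.)  Let `S` be a Dirac bundle over a compact
riemannian `n`-manifold `M`.  Here `Γ` is the space of smooth sections with the `L²` inner
product, `VF` the `C^∞(M)`-module (`F`-module) of vector fields, `cl X` Clifford
multiplication by the vector field `X`, `nabla X` the covariant derivative, `e` a global
orthonormal frame spanning the vector fields over `F`, `nabV` the Levi-Civita connection,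
`D` the Dirac operator, `lap = ∇*∇` the connection laplacian and `Rw` the Weitzenböck
curvature operator; the hypotheses are the structure equations and context facts
(generalized Bochner identity, formal self-adjointness on the compact manifold, Clifford
relations, Leibniz rule).  Conclusion: `σ` is a twistor section, i.e.
`∇_X σ + (1/n) X·Dσ = 0` for all `X`, if and only if `D²σ = (n/(n−1)) Rw σ`. -/
theorem twistor_section_iff_weitzenbock_eigen
    {Γ VF F : Type*} [NormedAddCommGroup Γ] [InnerProductSpace ℝ Γ]
    [CommRing F] [AddCommGroup VF] [Module F VF] [Module F Γ]
    (n : ℕ) (hn : 2 ≤ n)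
    (nabla cl : VF → Γ →ₗ[ℝ] Γ)
    (hnabla_add : ∀ X Y : VF, nabla (X + Y) = nabla X + nabla Y)
    (hnabla_smul : ∀ (f : F) (X : VF) (σ : Γ), nabla (f • X) σ = f • nabla X σ)
    (hcl_add : ∀ X Y : VF, cl (X + Y) = cl X + cl Y)
    (hcl_smul : ∀ (f : F) (X : VF) (σ : Γ), cl (f • X) σ = f • cl X σ)
    (hsmul_comm : ∀ (f : F) (r : ℝ) (σ : Γ), f • (r • σ) = r • (f • σ))
    (e : Fin n → VF)
    (hspan : ∀ X : VF, X ∈ Submodule.span F (Set.range e))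
    (nabV : VF → VF → VF)
    (D lap Rw : Γ →ₗ[ℝ] Γ)
    (hD : ∀ σ, D σ = ∑ i, cl (e i) (nabla (e i) σ))
    (hlap : ∀ σ, lap σ
      = -∑ j, (nabla (e j) (nabla (e j) σ) - nabla (nabV (e j) (e j)) σ))
    (hBochner : ∀ σ, D (D σ) = lap σ + Rw σ)
    (hD_sa : ∀ σ τ, ⟪D σ, τ⟫_ℝ = ⟪σ, D τ⟫_ℝ)
    (hlap_ip : ∀ σ τ, ⟪lap σ, τ⟫_ℝ = ∑ j, ⟪nabla (e j) σ, nabla (e j) τ⟫_ℝ)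
    (hcl_skew : ∀ (X : VF) (σ τ : Γ), ⟪cl X σ, τ⟫_ℝ + ⟪σ, cl X τ⟫_ℝ = 0)
    (hcl_frame : ∀ (i : Fin n) (σ : Γ), cl (e i) (cl (e i) σ) = -σ)
    (hLeib : ∀ (X Y : VF) (σ : Γ),
      nabla X (cl Y σ) = cl (nabV X Y) σ + cl Y (nabla X σ))
    (σ : Γ) :
    (∀ X : VF, nabla X σ + ((n : ℝ)⁻¹) • cl X (D σ) = 0) ↔
      D (D σ) = ((n : ℝ) / ((n : ℝ) - 1)) • Rw σ := by
  have hn2 : (2:ℝ) ≤ (n:ℝ) := by exact_mod_cast hn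
  have hn0 : (n:ℝ) ≠ 0 := by linarith
  have hn1 : (n:ℝ) - 1 ≠ 0 := by linarith
  constructor
  · intro h
    have h' : ∀ X : VF, nabla X σ = -((n:ℝ)⁻¹ • cl X (D σ)) :=
      fun X => eq_neg_of_add_eq_zero_left (h X)
    have hterm : ∀ j, nabla (e j) (nabla (e j) σ) - nabla (nabV (e j) (e j)) σ
        = -((n:ℝ)⁻¹ • cl (e j) (nabla (e j) (D σ))) := by
      intro j
      rw [h' (e j), h' (nabV (e j) (e j)), map_neg, map_smul, hLeib, smul_add]
      abel
    have hlapσ : lap σ = (n:ℝ)⁻¹ • D (D σ) := by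
      rw [hlap]
      simp only [hterm]
      rw [Finset.sum_neg_distrib, neg_neg, ← Finset.smul_sum, ← hD]
    have hb := hBochner σ
    rw [hlapσ] at hb
    have hRw : Rw σ = D (D σ) - (n:ℝ)⁻¹ • D (D σ) := eq_sub_of_add_eq' hb.symm
    rw [hRw, smul_sub, smul_smul, ← sub_smul]
    have : (n:ℝ) / ((n:ℝ) - 1) - (n:ℝ) / ((n:ℝ) - 1) * (n:ℝ)⁻¹ = 1 := by
      field_simp
    rw [this, one_smul]
  · intro h
    have hRw : Rw σ = (((n:ℝ)-1)/(n:ℝ)) • D (D σ) := by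
      rw [h, smul_smul]
      have : ((n:ℝ)-1)/(n:ℝ) * ((n:ℝ) / ((n:ℝ) - 1)) = 1 := by field_simp
      rw [this, one_smul]
    have hDD : ⟪D σ, D σ⟫_ℝ = ⟪σ, D (D σ)⟫_ℝ := hD_sa σ (D σ)
    have hA : ∑ i, ⟪nabla (e i) σ, nabla (e i) σ⟫_ℝ = ⟪lap σ, σ⟫_ℝ := (hlap_ip σ σ).symm
    have hB : ∑ i, ⟪nabla (e i) σ, cl (e i) (D σ)⟫_ℝ = -⟪D σ, D σ⟫_ℝ := by
      have h1 : ∀ i : Fin n, ⟪nabla (e i) σ, cl (e i) (D σ)⟫_ℝ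
          = -⟪cl (e i) (nabla (e i) σ), D σ⟫_ℝ := by
        intro i
        have := hcl_skew (e i) (nabla (e i) σ) (D σ)
        linarith
      simp only [h1]
      rw [Finset.sum_neg_distrib, ← sum_inner, ← hD]
    have hC : ∑ i, ⟪cl (e i) (D σ), cl (e i) (D σ)⟫_ℝ = (n:ℝ) * ⟪D σ, D σ⟫_ℝ := by
      have h1 : ∀ i : Fin n, ⟪cl (e i) (D σ), cl (e i) (D σ)⟫_ℝ = ⟪D σ, D σ⟫_ℝ := by
        intro i
        have h2 := hcl_skew (e i) (D σ) (cl (e i) (D σ))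
        rw [hcl_frame, inner_neg_right] at h2
        linarith
      simp only [h1, Finset.sum_const, Finset.card_univ, Fintype.card_fin, nsmul_eq_mul]
    have hlapip : ⟪lap σ, σ⟫_ℝ = (n:ℝ)⁻¹ * ⟪σ, D (D σ)⟫_ℝ := by
      have hl : lap σ = D (D σ) - Rw σ := eq_sub_of_add_eq (hBochner σ).symm
      rw [hl, hRw, inner_sub_left, real_inner_smul_left, real_inner_comm (D (D σ)) σ]
      field_simp
      ring
    have key : ∑ i, ⟪nabla (e i) σ + (n:ℝ)⁻¹ • cl (e i) (D σ),
        nabla (e i) σ + (n:ℝ)⁻¹ • cl (e i) (D σ)⟫_ℝ = 0 := by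
      have expand : ∀ i : Fin n, ⟪nabla (e i) σ + (n:ℝ)⁻¹ • cl (e i) (D σ),
          nabla (e i) σ + (n:ℝ)⁻¹ • cl (e i) (D σ)⟫_ℝ
          = ⟪nabla (e i) σ, nabla (e i) σ⟫_ℝ
            + 2 * ((n:ℝ)⁻¹ * ⟪nabla (e i) σ, cl (e i) (D σ)⟫_ℝ)
            + (n:ℝ)⁻¹ * ((n:ℝ)⁻¹ * ⟪cl (e i) (D σ), cl (e i) (D σ)⟫_ℝ) := by
        intro i
        rw [real_inner_add_add_self, real_inner_smul_right, real_inner_smul_left,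
          real_inner_smul_right]
      simp only [expand]
      rw [Finset.sum_add_distrib, Finset.sum_add_distrib, ← Finset.mul_sum, ← Finset.mul_sum,
        ← Finset.mul_sum, ← Finset.mul_sum, hA, hB, hC, hlapip, hDD]
      field_simp
      ring
    have hzero : ∀ i : Fin n, nabla (e i) σ + (n:ℝ)⁻¹ • cl (e i) (D σ) = 0 := by
      intro i
      have hnn : ∀ j ∈ Finset.univ, (0:ℝ) ≤ ⟪nabla (e j) σ + (n:ℝ)⁻¹ • cl (e j) (D σ),
          nabla (e j) σ + (n:ℝ)⁻¹ • cl (e j) (D σ)⟫_ℝ := fun j _ => real_inner_self_nonneg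
      have := (Finset.sum_eq_zero_iff_of_nonneg hnn).mp key i (Finset.mem_univ i)
      exact inner_self_eq_zero.mp this
    intro X
    refine Submodule.span_induction (p := fun X _ => nabla X σ + (n:ℝ)⁻¹ • cl X (D σ) = 0)
      ?_ ?_ ?_ ?_ (hspan X)
    · rintro x ⟨i, rfl⟩
      exact hzero i
    · show nabla (0:VF) σ + ((n:ℝ)⁻¹) • cl (0:VF) (D σ) = 0
      have h1 : nabla (0:VF) σ = 0 := by
        rw [show (0:VF) = (0:F) • (0:VF) by simp, hnabla_smul, zero_smul]
      have h2 : cl (0:VF) (D σ) = 0 := by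
        rw [show (0:VF) = (0:F) • (0:VF) by simp, hcl_smul, zero_smul]
      rw [h1, h2, smul_zero, add_zero]
    · intro x y _ _ hPx hPy
      rw [hnabla_add, hcl_add, LinearMap.add_apply, LinearMap.add_apply, smul_add,
        add_add_add_comm, hPx, hPy, add_zero]
    · intro f x _ hPx
      rw [hnabla_smul, hcl_smul, ← hsmul_comm, ← smul_add, hPx, smul_zero]
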